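/- The function y(z) = ± e^{δz} (w(ζ(z)) + 2δ²/α)^{1/2}, given parametrically with dζ/dz = e^{-δz} y = ±(w + 2δ²/α)^{1/2}, solves the non-autonomous Duffing-type equation y'' + (β e^{-δz} y - 2δ) y' + (e^{-δz}/2) y² (α e^{-δz} y - 2βδ) = 0 whenever w solves w_ζζ + β w_ζ + α w = 0 and w + 2δ²/α > 0. -/

import Mathlib

theorem stmt_10 (α β δ : ℝ) (hα : α ≠ 0) (ε : ℝ) (hε : ε = 1 ∨ ε = -1)
    (w : ℝ → ℝ) (hw : Differentiable ℝ w) (hw' : Differentiable ℝ (deriv w))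
    (hweq : ∀ ζ : ℝ, deriv (deriv w) ζ + β * deriv w ζ + α * w ζ = 0)
    (hpos : ∀ ζ : ℝ, 0 < w ζ + 2 * δ ^ 2 / α)
    (y ζ : ℝ → ℝ)
    (hζ : ∀ z : ℝ, HasDerivAt ζ (Real.exp (-(δ * z)) * y z) z)
    (hy : ∀ z : ℝ, y z = ε * Real.exp (δ * z) * Real.sqrt (w (ζ z) + 2 * δ ^ 2 / α)) :
    ∀ z : ℝ,
      deriv (deriv y) z + (β * Real.exp (-(δ * z)) * y z - 2 * δ) * deriv y z
        + (Real.exp (-(δ * z)) / 2) * y z ^ 2 *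
            (α * Real.exp (-(δ * z)) * y z - 2 * β * δ) = 0 := by
  have hε2 : ε * ε = 1 := by rcases hε with h | h <;> simp [h]
  set c := 2 * δ ^ 2 / α with hc
  have hsq : ∀ z, Real.sqrt (w (ζ z) + c) ^ 2 = w (ζ z) + c := fun z =>
    Real.sq_sqrt (hpos (ζ z)).le
  have hsqpos : ∀ z, 0 < Real.sqrt (w (ζ z) + c) := fun z => Real.sqrt_pos.2 (hpos (ζ z))
  have hey : ∀ z, Real.exp (-(δ * z)) * y z = ε * Real.sqrt (w (ζ z) + c) := by
    intro z
    rw [hy z, Real.exp_neg]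
    field_simp
  have he : ∀ z, HasDerivAt (fun z => Real.exp (δ * z)) (δ * Real.exp (δ * z)) z := by
    intro z
    have h1 : HasDerivAt (fun z : ℝ => δ * z) δ z := by
      simpa using (hasDerivAt_id z).const_mul δ
    exact ((Real.hasDerivAt_exp (δ * z)).comp z h1).congr_deriv (mul_comm _ _)
  have hu : ∀ z, HasDerivAt (fun z => w (ζ z) + c)
      (deriv w (ζ z) * (ε * Real.sqrt (w (ζ z) + c))) z := by
    intro z
    have h := (((hw (ζ z)).hasDerivAt.comp z (hζ z)).add_const c)
    rwa [hey z] at h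
  have hs : ∀ z, HasDerivAt (fun z => Real.sqrt (w (ζ z) + c))
      (ε * deriv w (ζ z) / 2) z := by
    intro z
    have h := (hu z).sqrt (ne_of_gt (hpos (ζ z)))
    convert h using 1
    field_simp [ne_of_gt (hsqpos z)]
  have hyfun : y = fun z => ε * Real.exp (δ * z) * Real.sqrt (w (ζ z) + c) := funext hy
  have hy' : ∀ z, HasDerivAt y (δ * y z + Real.exp (δ * z) * deriv w (ζ z) / 2) z := by
    intro z
    have h := (((he z).const_mul ε).mul (hs z))
    rw [show (fun z => ε * Real.exp (δ * z)) * (fun z => Real.sqrt (w (ζ z) + c)) = y from hyfun.symm] at h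
    refine h.congr_deriv (Eq.symm ?_)
    rw [hy z]
    linear_combination (-(Real.exp (δ * z) * deriv w (ζ z)) / 2) * hε2
  have hdy : deriv y = fun z => δ * y z + Real.exp (δ * z) * deriv w (ζ z) / 2 :=
    funext fun z => (hy' z).deriv
  intro z
  have hw'' : HasDerivAt (fun z => deriv w (ζ z))
      (deriv (deriv w) (ζ z) * (Real.exp (-(δ * z)) * y z)) z :=
    (hw' (ζ z)).hasDerivAt.comp z (hζ z)
  have hD : HasDerivAt (deriv y)
      (δ * (δ * y z + Real.exp (δ * z) * deriv w (ζ z) / 2)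
        + (δ * Real.exp (δ * z) * deriv w (ζ z)
            + Real.exp (δ * z) * (deriv (deriv w) (ζ z) * (Real.exp (-(δ * z)) * y z))) / 2) z := by
    rw [hdy]
    have h := ((hy' z).const_mul δ).add (((he z).mul hw'').div_const 2)
    exact h
    try rw [hdy]
    try ring
  have hddy := hD.deriv
  rw [hddy, hdy]
  have h1 : deriv (deriv w) (ζ z) = -(β * deriv w (ζ z)) - α * w (ζ z) := by
    linarith [hweq (ζ z)]
  have h2 : w (ζ z) = (Real.exp (-(δ * z)) * y z) ^ 2 - c := by
    have h3 := hey z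
    have h4 : (Real.exp (-(δ * z)) * y z) ^ 2 = w (ζ z) + c := by
      rw [h3, mul_pow, hsq z]
      rcases hε with h | h <;> simp [h]
    linarith
  rw [h1, h2, hc, Real.exp_neg]
  field_simp [Real.exp_ne_zero]
  ring
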